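/- arXiv:1411.4339 — 2 statements merged into one kernel-verified Lean document; each statement's English description precedes it below -/
import Mathlib

section
/- For every X ∈ F, N(X) = ‖V₊(X)^{1/4} Γ₊(X) V₊(X)^{1/4}‖_F² + ‖V₋(X)^{1/4} Γ₋(X) V₋(X)^{1/4}‖_F²; in particular N(X) ≥ 0. -/
set_option autoImplicit false

open Matrix Set Filter

attribute [local instance] Matrix.normedAddCommGroup Matrix.normedSpace

namespace BoxSDP

open scoped Classical

/-- Trace inner product `⟨A|B⟩ = Trace(Aᵀ B)`. -/
noncomputable def mip {m k : Type*} [Fintype m] [Fintype k]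
    (A B : Matrix m k ℝ) : ℝ :=
  (Aᵀ * B).trace

/-- Frobenius norm `‖A‖_F = √⟨A|A⟩`. -/
noncomputable def fnorm {m k : Type*} [Fintype m] [Fintype k]
    (A : Matrix m k ℝ) : ℝ :=
  Real.sqrt (mip A A)

/-- The feasible set `F = {X : O ⪯ X ⪯ I}` (membership forces symmetry). -/
def Feas (n : ℕ) : Set (Matrix (Fin n) (Fin n) ℝ) :=
  {X | X.PosSemidef ∧ (1 - X).PosSemidef}

/-- Square root of a positive semidefinite matrix (junk value `0` otherwise);
agrees with `A^{1/2} = Q K^{1/2} Qᵀ` on positive semidefinite matrices. -/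
noncomputable def psqrt {m : Type*} [Fintype m] [DecidableEq m]
    (A : Matrix m m ℝ) : Matrix m m ℝ :=
  if h : A.PosSemidef then
    (h.1.eigenvectorUnitary : Matrix m m ℝ) * diagonal ((↑) ∘ Real.sqrt ∘ h.1.eigenvalues) *
      (star h.1.eigenvectorUnitary : Matrix m m ℝ)
  else 0

/-- Fourth root `A^{1/4}` of a positive semidefinite matrix. -/
noncomputable def proot4 {m : Type*} [Fintype m] [DecidableEq m]
    (A : Matrix m m ℝ) : Matrix m m ℝ :=
  psqrt (psqrt A)

/-- The 2-norm of a symmetric matrix: its largest absolute eigenvalue. -/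
noncomputable def norm2 {m : Type*} [Fintype m] [DecidableEq m]
    (A : Matrix m m ℝ) : ℝ :=
  if h : A.IsHermitian then sSup (Set.range fun i => |h.eigenvalues i|) else 0

/-- The linear functional `H ↦ ⟨G|H⟩`, as a continuous linear map; a function
`f` has gradient matrix `G` at `X` iff `HasFDerivAt f (gradCLM G) X`. -/
noncomputable def gradCLM {n : ℕ} (G : Matrix (Fin n) (Fin n) ℝ) :
    Matrix (Fin n) (Fin n) ℝ →L[ℝ] ℝ :=
  LinearMap.toContinuousLinearMap
    { toFun := fun H => mip G H
      map_add' := fun x y => by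
        simp [mip, Matrix.mul_add]
      map_smul' := fun c x => by
        simp [mip, Matrix.mul_smul] }

/-- The Hessian bilinear form `⟨A | ∇²f(X) | B⟩` induced by the derivative
`hessOp` of the gradient map. -/
noncomputable def hform {n : ℕ}
    (hessOp : Matrix (Fin n) (Fin n) ℝ →L[ℝ] Matrix (Fin n) (Fin n) ℝ)
    (A B : Matrix (Fin n) (Fin n) ℝ) : ℝ :=
  mip A (hessOp B)

/-- `underline-f`: the minimum of `⟨G | Y − X̂⟩` over `Y ∈ F`. -/
noncomputable def underf {n : ℕ} (G Xh : Matrix (Fin n) (Fin n) ℝ) : ℝ :=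
  sInf ((fun Y => mip G (Y - Xh)) '' Feas n)

/-- First-order optimality condition at `Xs` for gradient matrix `G`. -/
def FirstOrderOpt {n : ℕ} (G Xs : Matrix (Fin n) (Fin n) ℝ) : Prop :=
  ∀ X ∈ Feas n, 0 ≤ mip G (X - Xs)

/-- A fixed eigenvalue decomposition `G = P Γ Pᵀ` of a symmetric matrix `G`,
with eigenvalues in descending order, split into the block `Pp, gp` of
positive eigenvalues and the block `Pm, gm` of nonpositive eigenvalues. -/
structure SpecDecomp (n : ℕ) (G : Matrix (Fin n) (Fin n) ℝ) where
  np : ℕ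
  nm : ℕ
  hdim : np + nm = n
  Pp : Matrix (Fin n) (Fin np) ℝ
  Pm : Matrix (Fin n) (Fin nm) ℝ
  gp : Fin np → ℝ
  gm : Fin nm → ℝ
  hgp_pos : ∀ i, 0 < gp i
  hgm_nonpos : ∀ j, gm j ≤ 0
  hgp_anti : ∀ i j : Fin np, i ≤ j → gp j ≤ gp i
  hgm_anti : ∀ i j : Fin nm, i ≤ j → gm j ≤ gm i
  hPp_orth : Ppᵀ * Pp = 1
  hPm_orth : Pmᵀ * Pm = 1
  hPpPm : Ppᵀ * Pm = 0
  hPPT : Pp * Ppᵀ + Pm * Pmᵀ = 1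
  hG : G = Pp * Matrix.diagonal gp * Ppᵀ + Pm * Matrix.diagonal gm * Pmᵀ

namespace SpecDecomp

variable {n : ℕ} {G : Matrix (Fin n) (Fin n) ℝ}

/-- `V₊(X) = P₊ᵀ X P₊`. -/
def Vp (sd : SpecDecomp n G) (X : Matrix (Fin n) (Fin n) ℝ) :
    Matrix (Fin sd.np) (Fin sd.np) ℝ :=
  sd.Ppᵀ * X * sd.Pp

/-- `V₋(X) = P₋ᵀ (I − X) P₋`. -/
def Vm (sd : SpecDecomp n G) (X : Matrix (Fin n) (Fin n) ℝ) :
    Matrix (Fin sd.nm) (Fin sd.nm) ℝ :=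
  sd.Pmᵀ * (1 - X) * sd.Pm

/-- The search direction `D(X) = P M Pᵀ` with blocks
`M₁₁ = V₊^{1/2} Γ₊ V₊^{1/2}`, `M₁₂ = γ_max P₊ᵀ X P₋`,
`M₂₁ = γ_max P₋ᵀ X P₊`, `M₂₂ = V₋^{1/2} Γ₋ V₋^{1/2}`. -/
noncomputable def Dmat (sd : SpecDecomp n G) (X : Matrix (Fin n) (Fin n) ℝ) :
    Matrix (Fin n) (Fin n) ℝ :=
  sd.Pp * (psqrt (sd.Vp X) * Matrix.diagonal sd.gp * psqrt (sd.Vp X)) * sd.Ppᵀ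
    + norm2 G • (sd.Pp * (sd.Ppᵀ * X * sd.Pm) * sd.Pmᵀ)
    + norm2 G • (sd.Pm * (sd.Pmᵀ * X * sd.Pp) * sd.Ppᵀ)
    + sd.Pm * (psqrt (sd.Vm X) * Matrix.diagonal sd.gm * psqrt (sd.Vm X)) * sd.Pmᵀ

/-- `N(X) = ⟨G | D(X)⟩`. -/
noncomputable def Nval (sd : SpecDecomp n G) (X : Matrix (Fin n) (Fin n) ℝ) : ℝ :=
  mip G (sd.Dmat X)

end SpecDecomp

section Aux

variable {m : Type*} [Fintype m] [DecidableEq m]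

open scoped MatrixOrder in
lemma psqrt_eq_sqrt {A : Matrix m m ℝ} (h : A.PosSemidef) : psqrt A = CFC.sqrt A := by
  rw [CFC.sqrt_eq_real_sqrt A h.nonneg, cfcₙ_eq_cfc, h.1.cfc_eq, IsHermitian.cfc, psqrt, dif_pos h]
  simp
  rfl

open scoped MatrixOrder in
lemma psqrt_posSemidef {A : Matrix m m ℝ} (h : A.PosSemidef) :
    (psqrt A).PosSemidef := by
  rw [psqrt_eq_sqrt h]; exact (CFC.sqrt_nonneg A).posSemidef

open scoped MatrixOrder in
lemma psqrt_mul_self {A : Matrix m m ℝ} (h : A.PosSemidef) :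
    psqrt A * psqrt A = A := by
  rw [psqrt_eq_sqrt h]; exact CFC.sqrt_mul_sqrt_self A h.nonneg

lemma psd_transpose_eq {A : Matrix m m ℝ} (h : A.PosSemidef) : Aᵀ = A := by
  have := h.isHermitian
  rwa [Matrix.IsHermitian, Matrix.conjTranspose_eq_transpose_of_trivial] at this

lemma mip_self_nonneg {k : Type*} [Fintype k] (A : Matrix m k ℝ) :
    0 ≤ mip A A := by
  unfold mip Matrix.trace
  simp only [Matrix.diag_apply, Matrix.mul_apply, Matrix.transpose_apply]
  exact Finset.sum_nonneg fun i _ => Finset.sum_nonneg fun j _ => mul_self_nonneg _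

lemma fnorm_sq (A : Matrix m m ℝ) : fnorm A ^ 2 = mip A A := by
  rw [fnorm, Real.sq_sqrt (mip_self_nonneg A)]

lemma aux_trace_eq {V : Matrix m m ℝ} (hV : V.PosSemidef) (g : m → ℝ) :
    (Matrix.diagonal g * (psqrt V * Matrix.diagonal g * psqrt V)).trace
      = fnorm (proot4 V * Matrix.diagonal g * proot4 V) ^ 2 := by
  set d := Matrix.diagonal g
  set S := psqrt V with hS
  set R := proot4 V with hR
  have hSpsd : S.PosSemidef := psqrt_posSemidef hV
  have hRR : R * R = S := by rw [hR, proot4, ← hS]; exact psqrt_mul_self hSpsd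
  have hRT : Rᵀ = R := psd_transpose_eq (by rw [hR, proot4, ← hS]; exact psqrt_posSemidef hSpsd)
  have hdT : dᵀ = d := Matrix.diagonal_transpose g
  rw [fnorm_sq]
  unfold mip
  have hAT : (R * d * R)ᵀ = R * d * R := by
    rw [Matrix.transpose_mul, Matrix.transpose_mul, hRT, hdT, Matrix.mul_assoc]
  rw [hAT]
  have h1 : (R * d * R) * (R * d * R) = R * (d * (S * (d * R))) := by
    rw [← hRR]; simp only [Matrix.mul_assoc]
  have h2 : (d * (S * (d * R))) * R = d * (S * d * S) := by
    rw [← hRR]; simp only [Matrix.mul_assoc]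
  rw [h1]
  conv_rhs => rw [Matrix.trace_mul_comm]
  rw [h2]

lemma trace_conj {n k : ℕ} {G : Matrix (Fin n) (Fin n) ℝ}
    {P : Matrix (Fin n) (Fin k) ℝ} {g : Fin k → ℝ}
    (hGP : G * P = P * Matrix.diagonal g) (hPorth : Pᵀ * P = 1)
    (S : Matrix (Fin k) (Fin k) ℝ) :
    (G * (P * S * Pᵀ)).trace = (Matrix.diagonal g * S).trace := by
  have h1 : G * (P * S * Pᵀ) = (P * Matrix.diagonal g * S) * Pᵀ := by
    simp only [← Matrix.mul_assoc]; rw [hGP]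
  rw [h1, Matrix.trace_mul_comm]
  simp only [← Matrix.mul_assoc]
  rw [hPorth, Matrix.one_mul]

lemma trace_cross {n k l : ℕ} {G : Matrix (Fin n) (Fin n) ℝ}
    {P : Matrix (Fin n) (Fin k) ℝ} {Q : Matrix (Fin n) (Fin l) ℝ} {g : Fin k → ℝ}
    (hGP : G * P = P * Matrix.diagonal g) (hQP : Qᵀ * P = 0)
    (B : Matrix (Fin k) (Fin l) ℝ) :
    (G * (P * B * Qᵀ)).trace = 0 := by
  have h1 : G * (P * B * Qᵀ) = (P * Matrix.diagonal g * B) * Qᵀ := by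
    simp only [← Matrix.mul_assoc]; rw [hGP]
  rw [h1, Matrix.trace_mul_comm]
  simp only [← Matrix.mul_assoc]
  rw [hQP]
  simp

end Aux

theorem Nval_eq_sum_fnorm_sq {n : ℕ}
    (f : Matrix (Fin n) (Fin n) ℝ → ℝ)
    (grad : Matrix (Fin n) (Fin n) ℝ → Matrix (Fin n) (Fin n) ℝ)
    (hgradsym : ∀ X ∈ Feas n, (grad X).IsSymm)
    (hgrad : ∀ X ∈ Feas n, HasFDerivAt f (gradCLM (grad X)) X)
    (X : Matrix (Fin n) (Fin n) ℝ) (hX : X ∈ Feas n)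
    (sd : SpecDecomp n (grad X)) :
    sd.Nval X =
      fnorm (proot4 (sd.Vp X) * Matrix.diagonal sd.gp * proot4 (sd.Vp X)) ^ 2
        + fnorm (proot4 (sd.Vm X) * Matrix.diagonal sd.gm * proot4 (sd.Vm X)) ^ 2
      ∧ 0 ≤ sd.Nval X := by
  have hGT : (grad X)ᵀ = grad X := hgradsym X hX
  have hPmPp : sd.Pmᵀ * sd.Pp = 0 := by
    have := congrArg Matrix.transpose sd.hPpPm
    simpa [Matrix.transpose_mul] using this
  have hGPp : grad X * sd.Pp = sd.Pp * Matrix.diagonal sd.gp := by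
    have h := congrArg (fun M => M * sd.Pp) sd.hG
    simpa [Matrix.add_mul, Matrix.mul_assoc, sd.hPp_orth, hPmPp] using h
  have hGPm : grad X * sd.Pm = sd.Pm * Matrix.diagonal sd.gm := by
    have h := congrArg (fun M => M * sd.Pm) sd.hG
    simpa [Matrix.add_mul, Matrix.mul_assoc, sd.hPm_orth, sd.hPpPm] using h
  have hVp : (sd.Vp X).PosSemidef := by
    have := hX.1.conjTranspose_mul_mul_same sd.Pp
    simpa [Matrix.conjTranspose_eq_transpose_of_trivial, SpecDecomp.Vp] using this
  have hVm : (sd.Vm X).PosSemidef := by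
    have := hX.2.conjTranspose_mul_mul_same sd.Pm
    simpa [Matrix.conjTranspose_eq_transpose_of_trivial, SpecDecomp.Vm] using this
  have hmain : sd.Nval X =
      (Matrix.diagonal sd.gp *
        (psqrt (sd.Vp X) * Matrix.diagonal sd.gp * psqrt (sd.Vp X))).trace
      + (Matrix.diagonal sd.gm *
        (psqrt (sd.Vm X) * Matrix.diagonal sd.gm * psqrt (sd.Vm X))).trace := by
    rw [SpecDecomp.Nval, SpecDecomp.Dmat, mip, hGT]
    rw [Matrix.mul_add, Matrix.mul_add, Matrix.mul_add,
      Matrix.trace_add, Matrix.trace_add, Matrix.trace_add,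
      Matrix.mul_smul, Matrix.mul_smul, Matrix.trace_smul, Matrix.trace_smul]
    rw [trace_conj hGPp sd.hPp_orth, trace_conj hGPm sd.hPm_orth,
      trace_cross hGPp hPmPp, trace_cross hGPm sd.hPpPm]
    simp
  have heq : sd.Nval X =
      fnorm (proot4 (sd.Vp X) * Matrix.diagonal sd.gp * proot4 (sd.Vp X)) ^ 2
        + fnorm (proot4 (sd.Vm X) * Matrix.diagonal sd.gm * proot4 (sd.Vm X)) ^ 2 := by
    rw [hmain, aux_trace_eq hVp, aux_trace_eq hVm]
  exact ⟨heq, heq ▸ add_nonneg (sq_nonneg _) (sq_nonneg _)⟩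

end BoxSDP
end

section
/- For every X ∈ F, ⟨Γ₊(X) | V₊(X)⟩ ≤ n₊(X) · ‖V₊(X)^{1/4} Γ₊(X) V₊(X)^{1/4}‖_F and ⟨−Γ₋(X) | V₋(X)⟩ ≤ n₋(X) · ‖V₋(X)^{1/4} Γ₋(X) V₋(X)^{1/4}‖_F. -/
set_option autoImplicit false

open Matrix Set Filter

attribute [local instance] Matrix.normedAddCommGroup Matrix.normedSpace

namespace BoxSDP

open scoped Classical

lemma mip_eq_sum {m k : Type*} [Fintype m] [Fintype k] (A B : Matrix m k ℝ) :
    mip A B = ∑ p : m × k, A p.1 p.2 * B p.1 p.2 := by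
  rw [Fintype.sum_prod_type]
  simp [mip, Matrix.trace, Matrix.mul_apply, Matrix.diag, mul_comm]
  rw [Finset.sum_comm]

lemma mip_le_fnorm {m k : Type*} [Fintype m] [Fintype k] (A B : Matrix m k ℝ) :
    mip A B ≤ fnorm A * fnorm B := by
  rw [mip_eq_sum, fnorm, fnorm, mip_eq_sum, mip_eq_sum]
  simpa [sq] using Real.sum_mul_le_sqrt_mul_sqrt Finset.univ
    (fun p : m × k => A p.1 p.2) (fun p : m × k => B p.1 p.2)

lemma fnorm_nonneg' {m k : Type*} [Fintype m] [Fintype k] (A : Matrix m k ℝ) :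
    0 ≤ fnorm A := Real.sqrt_nonneg _

lemma fnorm_neg' {m k : Type*} [Fintype m] [Fintype k] (A : Matrix m k ℝ) :
    fnorm (-A) = fnorm A := by
  simp [fnorm, mip]

lemma psqrt_spec {m : Type*} [Fintype m] [DecidableEq m] (A : Matrix m m ℝ)
    (hA : A.PosSemidef) : (psqrt A).PosSemidef ∧ psqrt A * psqrt A = A := by
  rw [psqrt, dif_pos hA]
  have hU : (star hA.1.eigenvectorUnitary : Matrix m m ℝ) * hA.1.eigenvectorUnitary = 1 :=
    (hA.1.eigenvectorUnitary).2.1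
  constructor
  · have hd : (diagonal ((↑) ∘ Real.sqrt ∘ hA.1.eigenvalues) : Matrix m m ℝ).PosSemidef :=
      PosSemidef.diagonal (fun i => by simpa using Real.sqrt_nonneg _)
    exact hd.mul_mul_conjTranspose_same _
  · have hdd : (diagonal ((↑) ∘ Real.sqrt ∘ hA.1.eigenvalues) : Matrix m m ℝ) *
        diagonal ((↑) ∘ Real.sqrt ∘ hA.1.eigenvalues) =
        diagonal (RCLike.ofReal ∘ hA.1.eigenvalues) := by
      rw [diagonal_mul_diagonal]
      congr 1
      funext i
      simpa using Real.mul_self_sqrt (hA.eigenvalues_nonneg i)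
    rw [show ∀ P Q S : Matrix m m ℝ, P * S * Q * (P * S * Q) = P * (S * (Q * P) * S) * Q from
      fun P Q S => by simp only [Matrix.mul_assoc], hU, Matrix.mul_one, hdd]
    conv_rhs => rw [hA.1.spectral_theorem]
    simp [Unitary.conjStarAlgAut_apply]

lemma key_ineq {m : Type*} [Fintype m] [DecidableEq m] (g : m → ℝ)
    (V : Matrix m m ℝ) (hV : V.PosSemidef) (hV1 : (1 - V).PosSemidef) :
    mip (Matrix.diagonal g) V ≤
      (Fintype.card m : ℝ) * fnorm (proot4 V * Matrix.diagonal g * proot4 V) := by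
  set W := psqrt V with hW0
  have hWps : W.PosSemidef := (psqrt_spec V hV).1
  have hWW : W * W = V := (psqrt_spec V hV).2
  have hRdef : proot4 V = psqrt W := by rw [proot4, ← hW0]
  set R := proot4 V with hR0
  have hRps : R.PosSemidef := by rw [hRdef]; exact (psqrt_spec W hWps).1
  have hRR : R * R = W := by rw [hRdef]; exact (psqrt_spec W hWps).2
  have hRT : Rᵀ = R := by
    have := hRps.isHermitian
    rwa [Matrix.IsHermitian, Matrix.conjTranspose_eq_transpose_of_trivial] at this
  have hWT : Wᵀ = W := by
    have := hWps.isHermitian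
    rwa [Matrix.IsHermitian, Matrix.conjTranspose_eq_transpose_of_trivial] at this
  set B := R * Matrix.diagonal g * R with hB0
  have hBT : Bᵀ = B := by
    rw [hB0, Matrix.transpose_mul, Matrix.transpose_mul, hRT, Matrix.diagonal_transpose,
      Matrix.mul_assoc]
  have hRWR : R * W * R = V := by
    rw [← hWW, ← hRR]
    simp only [Matrix.mul_assoc]
  have h1 : B * W = R * (Matrix.diagonal g * (R * W)) := by
    simp only [hB0, Matrix.mul_assoc]
  have h2 : (B * W).trace = (Matrix.diagonal g * V).trace := by
    rw [h1, Matrix.trace_mul_comm, Matrix.mul_assoc, hRWR]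
  have htr : mip (Matrix.diagonal g) V = mip B W := by
    rw [mip, mip, hBT, Matrix.diagonal_transpose]
    exact h2.symm
  have hub : mip B W ≤ fnorm B * fnorm W := mip_le_fnorm B W
  have hfW : fnorm W = Real.sqrt V.trace := by
    rw [fnorm, mip, hWT, hWW]
  have htrV : V.trace ≤ (Fintype.card m : ℝ) := by
    have hle : ∀ i, V i i ≤ 1 := by
      intro i
      have h := hV1.diag_nonneg (i := i)
      simp [Matrix.sub_apply] at h
      linarith
    calc V.trace = ∑ i, V i i := rfl
      _ ≤ ∑ _i : m, (1 : ℝ) := Finset.sum_le_sum fun i _ => hle i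
      _ = (Fintype.card m : ℝ) := by simp
  have hfW' : fnorm W ≤ (Fintype.card m : ℝ) := by
    rw [hfW]
    calc Real.sqrt V.trace ≤ Real.sqrt (Fintype.card m : ℝ) := Real.sqrt_le_sqrt htrV
      _ ≤ (Fintype.card m : ℝ) := by
          have hcc : (Fintype.card m : ℝ) ≤ (Fintype.card m : ℝ) ^ 2 := by
            exact_mod_cast Nat.le_self_pow two_ne_zero (Fintype.card m)
          calc Real.sqrt (Fintype.card m : ℝ) ≤ Real.sqrt ((Fintype.card m : ℝ) ^ 2) :=
                Real.sqrt_le_sqrt hcc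
            _ = (Fintype.card m : ℝ) := Real.sqrt_sq (by positivity)
  calc mip (Matrix.diagonal g) V = mip B W := htr
    _ ≤ fnorm B * fnorm W := hub
    _ ≤ fnorm B * (Fintype.card m : ℝ) :=
        mul_le_mul_of_nonneg_left hfW' (fnorm_nonneg' B)
    _ = (Fintype.card m : ℝ) * fnorm B := mul_comm _ _

theorem inner_gamma_V_le {n : ℕ}
    (f : Matrix (Fin n) (Fin n) ℝ → ℝ)
    (grad : Matrix (Fin n) (Fin n) ℝ → Matrix (Fin n) (Fin n) ℝ)
    (hgradsym : ∀ X ∈ Feas n, (grad X).IsSymm)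
    (hgrad : ∀ X ∈ Feas n, HasFDerivAt f (gradCLM (grad X)) X)
    (X : Matrix (Fin n) (Fin n) ℝ) (hX : X ∈ Feas n)
    (sd : SpecDecomp n (grad X)) :
    mip (Matrix.diagonal sd.gp) (sd.Vp X) ≤
      (sd.np : ℝ) * fnorm (proot4 (sd.Vp X) * Matrix.diagonal sd.gp * proot4 (sd.Vp X)) ∧
    mip (-(Matrix.diagonal sd.gm)) (sd.Vm X) ≤
      (sd.nm : ℝ) * fnorm (proot4 (sd.Vm X) * Matrix.diagonal sd.gm * proot4 (sd.Vm X)) :=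
  by
  obtain ⟨hX1, hX2⟩ := hX
  have hPpT : (sd.Pp)ᴴ = sd.Ppᵀ := Matrix.conjTranspose_eq_transpose_of_trivial _
  have hPmT : (sd.Pm)ᴴ = sd.Pmᵀ := Matrix.conjTranspose_eq_transpose_of_trivial _
  have hVp : (sd.Vp X).PosSemidef := by
    have := hX1.conjTranspose_mul_mul_same sd.Pp
    rwa [hPpT] at this
  have hVp1 : (1 - sd.Vp X).PosSemidef := by
    have heq : 1 - sd.Vp X = sd.Ppᵀ * (1 - X) * sd.Pp := by
      rw [SpecDecomp.Vp, Matrix.mul_sub, Matrix.sub_mul, Matrix.mul_one, sd.hPp_orth]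
    rw [heq]
    have := hX2.conjTranspose_mul_mul_same sd.Pp
    rwa [hPpT] at this
  have hVm : (sd.Vm X).PosSemidef := by
    have := hX2.conjTranspose_mul_mul_same sd.Pm
    rwa [hPmT] at this
  have hVm1 : (1 - sd.Vm X).PosSemidef := by
    have heq : 1 - sd.Vm X = sd.Pmᵀ * X * sd.Pm := by
      rw [SpecDecomp.Vm, Matrix.mul_sub, Matrix.sub_mul, Matrix.mul_one, sd.hPm_orth]
      abel
    rw [heq]
    have := hX1.conjTranspose_mul_mul_same sd.Pm
    rwa [hPmT] at this
  constructor
  · have h := key_ineq sd.gp (sd.Vp X) hVp hVp1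
    simpa using h
  · have h := key_ineq (fun i => -sd.gm i) (sd.Vm X) hVm hVm1
    have hdn : Matrix.diagonal (fun i => -sd.gm i) = -Matrix.diagonal sd.gm := by
      ext i j
      by_cases hij : i = j <;> simp [Matrix.diagonal, hij]
    rw [hdn, show proot4 (sd.Vm X) * -Matrix.diagonal sd.gm * proot4 (sd.Vm X) =
        -(proot4 (sd.Vm X) * Matrix.diagonal sd.gm * proot4 (sd.Vm X)) from by
        rw [Matrix.mul_neg, Matrix.neg_mul], fnorm_neg'] at h
    simpa using h


end BoxSDP
end
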